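/- Every intersection graph of n subcubes of {0,1}^2 with n ≥ 3(k−1)+1 contains either a clique of size k or an independent set of size 4; hence R_2(k,4) = 3(k−1)+1. -/
import Mathlib


/-- The subcube of `{0,1}^d` represented by `u ∈ {0,1,*}^d` (`none` = `*`). -/
def cubeSet {d : ℕ} (u : Fin d → Option Bool) : Set (Fin d → Bool) :=
  {x | ∀ i : Fin d, ∀ b : Bool, u i = some b → x i = b}

/-- The intersection graph of a family of subcubes contains a clique of size `k`. -/
def cubesHaveClique {d n : ℕ} (A : Fin n → (Fin d → Option Bool)) (k : ℕ) : Prop :=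
  ∃ s : Finset (Fin n), s.card = k ∧
    ∀ i ∈ s, ∀ j ∈ s, i ≠ j → (cubeSet (A i) ∩ cubeSet (A j)).Nonempty

/-- The intersection graph of a family of subcubes contains an independent set of size `l`. -/
def cubesHaveIndep {d n : ℕ} (A : Fin n → (Fin d → Option Bool)) (l : ℕ) : Prop :=
  ∃ s : Finset (Fin n), s.card = l ∧
    ∀ i ∈ s, ∀ j ∈ s, i ≠ j → cubeSet (A i) ∩ cubeSet (A j) = ∅

/-- `Rd d k l`: the least `n` such that every intersection graph of `n` subcubes of
`{0,1}^d` contains a clique of size `k` or an independent set of size `l`. -/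
noncomputable def Rd (d k l : ℕ) : ℕ :=
  sInf {n : ℕ | ∀ A : Fin n → (Fin d → Option Bool),
    cubesHaveClique A k ∨ cubesHaveIndep A l}

/-- The cube given by a single point. -/
def RdAux.pt {d : ℕ} (p : Fin d → Bool) : Fin d → Option Bool := fun i => some (p i)

lemma RdAux.cubeSet_pt {d : ℕ} (p : Fin d → Bool) : cubeSet (RdAux.pt p) = {p} := by
  ext x
  constructor
  · intro hx
    funext i
    exact hx i (p i) rfl
  · rintro rfl i b hb
    exact (Option.some.inj hb)

lemma RdAux.cubeSet_nonempty {d : ℕ} (u : Fin d → Option Bool) : (cubeSet u).Nonempty := by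
  refine ⟨fun i => (u i).getD false, fun i b hb => ?_⟩
  simp [hb]

def RdAux.qpt : Fin 3 → (Fin 2 → Bool) := ![![true, true], ![true, false], ![false, true]]

lemma RdAux.qpt_inj : Function.Injective RdAux.qpt := by decide

def RdAux.res {m : ℕ} (i : Fin m) : Fin 3 := ⟨i.val % 3, Nat.mod_lt _ (by norm_num)⟩

lemma RdAux.upper {k : ℕ} (A : Fin (3 * (k - 1) + 1) → (Fin 2 → Option Bool)) :
    cubesHaveClique A k ∨ cubesHaveIndep A 4 := by
  by_cases h : ∀ p : Fin 2 → Bool, ∃ i, cubeSet (A i) = {p}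
  · right
    choose g hg using h
    have hginj : Function.Injective g := by
      intro p q hpq
      have : ({p} : Set (Fin 2 → Bool)) = {q} := by rw [← hg p, ← hg q, hpq]
      simpa using this
    refine ⟨Finset.univ.image g, ?_, ?_⟩
    · rw [Finset.card_image_of_injective _ hginj]
      simp
    · intro i hi j hj hij
      simp only [Finset.mem_image, Finset.mem_univ, true_and] at hi hj
      obtain ⟨p, rfl⟩ := hi
      obtain ⟨q, rfl⟩ := hj
      have hpq : p ≠ q := fun e => hij (by rw [e])
      rw [hg p, hg q]
      rw [Set.singleton_inter_eq_empty]; simpa using hpq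
  · left
    push_neg at h
    obtain ⟨p0, hp0⟩ := h
    have hex : ∀ i, ∃ x, x ∈ cubeSet (A i) ∧ x ≠ p0 := by
      intro i
      by_contra hc
      push_neg at hc
      exact hp0 i (Set.eq_singleton_iff_nonempty_unique_mem.mpr
        ⟨RdAux.cubeSet_nonempty _, hc⟩)
    choose f hf1 hf2 using hex
    set T : Finset (Fin 2 → Bool) := Finset.univ.erase p0 with hT
    have hTcard : T.card = 3 := by
      rw [hT, Finset.card_erase_of_mem (Finset.mem_univ _)]
      simp
    have hmaps : ∀ i ∈ (Finset.univ : Finset (Fin (3 * (k - 1) + 1))), f i ∈ T := by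
      intro i _
      exact Finset.mem_erase.mpr ⟨hf2 i, Finset.mem_univ _⟩
    have hsum := Finset.card_eq_sum_card_fiberwise hmaps
    have : ∃ p ∈ T, k ≤ (Finset.univ.filter (fun i => f i = p)).card := by
      by_contra hc
      push_neg at hc
      have hle : ∀ p ∈ T, (Finset.univ.filter (fun i => f i = p)).card ≤ k - 1 := by
        intro p hp
        have := hc p hp
        omega
      have : (Finset.univ : Finset (Fin (3 * (k - 1) + 1))).card ≤ T.card * (k - 1) := by
        rw [hsum]
        calc ∑ p ∈ T, (Finset.univ.filter (fun i => f i = p)).card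
            ≤ ∑ _p ∈ T, (k - 1) := Finset.sum_le_sum hle
          _ = T.card * (k - 1) := by rw [Finset.sum_const, smul_eq_mul]
      rw [hTcard] at this
      simp only [Finset.card_univ, Fintype.card_fin] at this
      omega
    obtain ⟨p, _, hpk⟩ := this
    obtain ⟨s, hs, hscard⟩ := Finset.exists_subset_card_eq hpk
    refine ⟨s, hscard, ?_⟩
    intro i hi j hj _
    have hfi : f i = p := (Finset.mem_filter.mp (hs hi)).2
    have hfj : f j = p := (Finset.mem_filter.mp (hs hj)).2
    exact ⟨f i, hf1 i, by rw [hfi, ← hfj]; exact hf1 j⟩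

lemma RdAux.lower {k m : ℕ} (hk : 1 ≤ k) (hm : m ≤ 3 * (k - 1)) :
    ¬ (cubesHaveClique (fun i : Fin m => RdAux.pt (RdAux.qpt (RdAux.res i))) k ∨
       cubesHaveIndep (fun i : Fin m => RdAux.pt (RdAux.qpt (RdAux.res i))) 4) := by
  rintro (⟨s, hcard, hcl⟩ | ⟨s, hcard, hind⟩)
  · have hne : s.Nonempty := Finset.card_pos.mp (hcard ▸ hk)
    obtain ⟨i0, hi0⟩ := hne
    have hres : ∀ i ∈ s, RdAux.res i = RdAux.res i0 := by
      intro i hi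
      by_cases hii : i = i0
      · rw [hii]
      · obtain ⟨x, hx1, hx2⟩ := hcl i hi i0 hi0 hii
        rw [RdAux.cubeSet_pt] at hx1 hx2
        have : RdAux.qpt (RdAux.res i) = RdAux.qpt (RdAux.res i0) := by
          rw [← hx1, ← hx2]
        exact RdAux.qpt_inj this
    have hinj : Set.InjOn (fun i : Fin m => i.val / 3) s := by
      intro i hi j hj hij
      have h1 := hres i hi
      have h2 := hres j hj
      have hmod : i.val % 3 = j.val % 3 := by
        have := h1.trans h2.symm
        simpa [RdAux.res, Fin.ext_iff] using this
      have hdiv : i.val / 3 = j.val / 3 := hij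
      have : i.val = j.val := by omega
      exact Fin.ext this
    have hmaps : ∀ i ∈ s, i.val / 3 ∈ Finset.range (k - 1) := by
      intro i _
      have : i.val < 3 * (k - 1) := lt_of_lt_of_le i.isLt hm
      rw [Finset.mem_range]
      omega
    have := Finset.card_le_card_of_injOn _ hmaps hinj
    rw [hcard, Finset.card_range] at this
    omega
  · have hlt : (Finset.univ : Finset (Fin 3)).card < s.card := by
      rw [hcard]; simp
    obtain ⟨i, hi, j, hj, hij, heq⟩ :=
      Finset.exists_ne_map_eq_of_card_lt_of_maps_to hlt
        (fun i _ => Finset.mem_univ (RdAux.res i))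
    have := hind i hi j hj hij
    rw [RdAux.cubeSet_pt, RdAux.cubeSet_pt, heq] at this
    simp at this

/-- `R_2(k,4) = 3(k-1)+1`. -/
theorem Rd_two_k_four {k : ℕ} (hk : 1 ≤ k) : Rd 2 k 4 = 3 * (k - 1) + 1 := by
  have hmem : (3 * (k - 1) + 1) ∈ {n : ℕ | ∀ A : Fin n → (Fin 2 → Option Bool),
      cubesHaveClique A k ∨ cubesHaveIndep A 4} := fun A => RdAux.upper A
  refine le_antisymm (Nat.sInf_le hmem) ?_
  refine le_csInf ⟨_, hmem⟩ ?_
  intro m hm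
  by_contra hlt
  push_neg at hlt
  have hm' : m ≤ 3 * (k - 1) := by omega
  exact RdAux.lower hk hm' (hm _)
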